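/- Let w : ℝ → (0,∞) be a continuous 2π-periodic function that is angle-separable and satisfies max w > min w. Then there exist α₀ ∈ ℝ and θ₁, θ₂ ∈ [0,π) with θ₁ + θ₂ < π such that: (a) for every t ∈ ℝ, w(t) = max w if and only if t ≡ α₀ + θ (mod 2π) for some θ with |θ| ≤ θ₁; and (b) for every t ∈ ℝ, w(t) = min w if and only if t ≡ α₀ + π + θ (mod 2π) for some θ with |θ| ≤ θ₂. In other words, the set of maximum points of the corresponding function on the unit circle is a closed arc centered at angle α₀, the set of minimum points is a closed arc centered at the antipodal angle α₀ + π, and these arcs are disjoint. -/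

import Mathlib

open Real Set

namespace Stmt1Aux

lemma two_pi_pos : (0:ℝ) < 2 * π := by positivity

variable {w : ℝ → ℝ}

lemma perz (hper : ∀ t, w (t + 2 * π) = w t) (k : ℤ) (t : ℝ) :
    w (t + 2 * π * k) = w t := by
  have h : Function.Periodic w (2 * π) := hper
  have := (h.int_mul k) t
  rwa [show (k : ℝ) * (2 * π) = 2 * π * k by ring] at this

lemma exists_max (hcont : Continuous w) (hper : ∀ t, w (t + 2 * π) = w t) :
    ∃ p, ∀ s, w s ≤ w p := by
  obtain ⟨p, _, hp⟩ := isCompact_Icc.exists_isMaxOn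
    (Set.nonempty_Icc.2 (by positivity : (0:ℝ) ≤ 2 * π)) hcont.continuousOn
  refine ⟨p, fun s => ?_⟩
  set s' := toIcoMod two_pi_pos 0 s with hs'
  have h1 : s' ∈ Set.Ico (0:ℝ) (0 + 2 * π) := toIcoMod_mem_Ico two_pi_pos 0 s
  have h2 : w s = w s' := by
    have h3 := toIcoMod_add_toIcoDiv_zsmul two_pi_pos 0 s
    have := perz hper (toIcoDiv two_pi_pos 0 s) s'
    rw [show s' + 2 * π * (toIcoDiv two_pi_pos 0 s) = s' + (toIcoDiv two_pi_pos 0 s) • (2*π) by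
      rw [zsmul_eq_mul]; ring, h3] at this
    exact this
  rw [h2]
  exact hp (Set.mem_Icc.2 ⟨h1.1, by linarith [h1.2]⟩)

lemma exists_min (hcont : Continuous w) (hper : ∀ t, w (t + 2 * π) = w t) :
    ∃ p, ∀ s, w p ≤ w s := by
  obtain ⟨p, hp⟩ := exists_max (w := fun t => -w t) (hcont.neg) (fun t => by simp [hper t])
  exact ⟨p, fun s => by have := hp s; simpa using this⟩

end Stmt1Aux

namespace Stmt1Aux

variable {w : ℝ → ℝ}

-- contradiction from a small period
lemma period_contra (hcont : Continuous w) (hper : ∀ t, w (t + 2 * π) = w t)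
    (hsep : ∀ α : ℝ,
      (∀ θ ∈ Set.Ioo (0 : ℝ) π, w (α - θ) ≤ w (α + θ)) ∨
      (∀ θ ∈ Set.Ioo (0 : ℝ) π, w (α + θ) ≤ w (α - θ)))
    (hnc : ∃ s t : ℝ, w s < w t)
    (c : ℝ) (hc0 : 0 < c) (hcπ : c ≤ π)
    (hcper : ∀ x, w (x + c) = w x) : False := by
  obtain ⟨p, hp⟩ := exists_max hcont hper
  obtain ⟨q, hq⟩ := exists_min hcont hper
  obtain ⟨s, t, hst⟩ := hnc
  have hMm : w q < w p := lt_of_le_of_lt (hq s) (lt_of_lt_of_le hst (hp t))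
  have hcperz : ∀ (k : ℤ) (x : ℝ), w (x + c * k) = w x := by
    intro k x
    have h : Function.Periodic w c := hcper
    have := (h.int_mul k) x
    rwa [show (k : ℝ) * c = c * k by ring] at this
  set k : ℤ := ⌊(p - q) / c⌋ with hk
  set q' : ℝ := q + c * k with hq'
  have hwq' : w q' = w q := hcperz k q
  have hb1 : q' ≤ p := by
    have := Int.floor_le ((p - q) / c)
    rw [← hk] at this
    have : (k : ℝ) * c ≤ p - q := by
      calc (k : ℝ) * c = ((p-q)/c) * c - (((p-q)/c) - k) * c := by ring
        _ ≤ ((p-q)/c) * c := by nlinarith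
        _ = p - q := by field_simp
    linarith [this]
  have hb2 : p < q' + c := by
    have := Int.lt_floor_add_one ((p - q) / c)
    rw [← hk] at this
    have : p - q < ((k:ℝ) + 1) * c := by
      calc p - q = ((p-q)/c) * c := by field_simp
        _ < ((k:ℝ)+1) * c := by nlinarith
    simp only [hq']; nlinarith
  have hne : q' < p := by
    rcases lt_or_eq_of_le hb1 with h | h
    · exact h
    · exfalso; rw [h] at hwq'; linarith
  set α : ℝ := (p + q') / 2 with hα
  set θ₀ : ℝ := (p - q') / 2 with hθ₀
  have hθ₀pos : 0 < θ₀ := by simp only [hθ₀]; linarith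
  have hθ₀c : θ₀ < c / 2 := by simp only [hθ₀]; linarith
  have hαp : α + θ₀ = p := by simp only [hα, hθ₀]; ring
  have hαq : α - θ₀ = q' := by simp only [hα, hθ₀]; ring
  have hθ₀mem : θ₀ ∈ Set.Ioo (0:ℝ) π := ⟨hθ₀pos, by linarith [pi_pos]⟩
  rcases hsep α with hA | hB
  · set θ' : ℝ := c - θ₀ with hθ'
    have hθ'mem : θ' ∈ Set.Ioo (0:ℝ) π := ⟨by simp only [hθ']; linarith,
      by simp only [hθ']; linarith⟩
    have h1 : w (α + θ') = w q := by
      rw [show α + θ' = (α - θ₀) + c by simp only [hθ']; ring, hcper, hαq, hwq']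
    have h2 : w (α - θ') = w p := by
      have hx := hcper (α + θ₀ - c)
      rw [show α + θ₀ - c + c = α + θ₀ by ring] at hx
      rw [show α - θ' = α + θ₀ - c by simp only [hθ']; ring, ← hx, hαp]
    have := hA θ' hθ'mem
    rw [h1, h2] at this
    linarith
  · have := hB θ₀ hθ₀mem
    rw [hαp, hαq, hwq'] at this
    linarith

-- symmetry from membership in both A and B
lemma sym_of_AB (hper : ∀ t, w (t + 2 * π) = w t) (α : ℝ)
    (hA : ∀ θ ∈ Set.Ioo (0:ℝ) π, w (α - θ) ≤ w (α + θ))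
    (hB : ∀ θ ∈ Set.Ioo (0:ℝ) π, w (α + θ) ≤ w (α - θ)) :
    ∀ θ : ℝ, w (α + θ) = w (α - θ) := by
  have key : ∀ θ ∈ Set.Ioc (-π) π, w (α + θ) = w (α - θ) := by
    intro θ hθ
    rcases lt_trichotomy θ 0 with h | h | h
    · have hmem : -θ ∈ Set.Ioo (0:ℝ) π := ⟨by linarith, by linarith [hθ.1]⟩
      have := le_antisymm (hA (-θ) hmem) (hB (-θ) hmem)
      rw [show α + -θ = α - θ by ring, show α - -θ = α + θ by ring] at this
      exact this
    · rw [h]; ring_nf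
    · rcases lt_or_eq_of_le hθ.2 with h2 | h2
      · exact le_antisymm (hB θ ⟨h, h2⟩) (hA θ ⟨h, h2⟩)
      · subst h2
        have := hper (α - π)
        rw [show α - π + 2 * π = α + π by ring] at this
        exact this
  intro θ
  set θ' : ℝ := toIocMod two_pi_pos (-π) θ with hθ'
  have hmem : θ' ∈ Set.Ioc (-π) (-π + 2*π) := toIocMod_mem_Ioc two_pi_pos (-π) θ
  have hmem' : θ' ∈ Set.Ioc (-π) π := ⟨hmem.1, by linarith [hmem.2]⟩
  set k : ℤ := toIocDiv two_pi_pos (-π) θ with hk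
  have hdec : θ' + k • (2*π) = θ := toIocMod_add_toIocDiv_zsmul two_pi_pos (-π) θ
  have hθeq : θ = θ' + 2 * π * k := by rw [← hdec, zsmul_eq_mul]; ring
  have e1 : w (α + θ) = w (α + θ') := by
    rw [hθeq, show α + (θ' + 2*π*k) = (α + θ') + 2*π*k by ring, perz hper]
  have e2 : w (α - θ) = w (α - θ') := by
    rw [hθeq, show α - (θ' + 2*π*k) = (α - θ') + 2*π*((-k : ℤ) : ℝ) by push_cast; ring,
      perz hper]
  rw [e1, e2]
  exact key θ' hmem'

lemma period_of_two_sym (α β : ℝ)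
    (hα : ∀ θ, w (α + θ) = w (α - θ)) (hβ : ∀ θ, w (β + θ) = w (β - θ)) :
    ∀ x, w (x + 2 * (β - α)) = w x := by
  intro x
  have h1 := hβ (x + 2 * (β - α) - β)
  have h2 := hα (α - x)
  rw [show β + (x + 2*(β-α) - β) = x + 2*(β-α) by ring] at h1
  rw [show β - (x + 2*(β-α) - β) = α + (α - x) by ring] at h1
  rw [show α - (α - x) = x by ring] at h2
  rw [h1, h2]

-- dichotomy: a period in (0, 2π) yields either a period in (0, π] or constancy
lemma const_or_small_period (hcont : Continuous w) (hper : ∀ t, w (t + 2 * π) = w t)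
    (d : ℝ) (hd0 : 0 < d) (hd2 : d < 2 * π) (hdper : ∀ x, w (x + d) = w x) :
    (∃ c, 0 < c ∧ c ≤ π ∧ ∀ x, w (x + c) = w x) ∨ (∀ s t, w s = w t) := by
  set P : AddSubgroup ℝ :=
    { carrier := {p : ℝ | ∀ x, w (x + p) = w x}
      zero_mem' := by intro x; simp
      add_mem' := by
        intro a b ha hb x
        rw [← add_assoc, hb, ha]
      neg_mem' := by
        intro a ha x
        have := ha (x + -a)
        rw [show x + -a + a = x by ring] at this
        exact this.symm } with hP
  have h2πP : (2 * π) ∈ P := hper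
  have hdP : d ∈ P := hdper
  rcases P.dense_or_cyclic with hdense | ⟨a, hcyc⟩
  · right
    intro s t
    have hfun : (fun p => w (s + p)) = (fun _ => w s) := by
      refine Continuous.ext_on hdense (hcont.comp (by continuity)) continuous_const ?_
      intro p hp
      exact hp s
    have := congrFun hfun (t - s)
    simp only [show s + (t - s) = t by ring] at this
    exact this.symm
  · left
    rw [hcyc] at h2πP hdP
    obtain ⟨n, hn⟩ := (AddSubgroup.mem_closure_singleton).1 h2πP
    obtain ⟨m, hm⟩ := (AddSubgroup.mem_closure_singleton).1 hdP
    have ha0 : a ≠ 0 := by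
      intro h; rw [h] at hn; simp at hn
    set c : ℝ := |a| with hc
    have hc0 : 0 < c := abs_pos.2 ha0
    have hcP : c ∈ P := by
      rcases abs_choice a with h | h
      · rw [hc, h, hcyc]; exact AddSubgroup.mem_closure_singleton.2 ⟨1, one_zsmul a⟩
      · rw [hc, h, hcyc]; exact AddSubgroup.mem_closure_singleton.2 ⟨-1, by simp⟩
    have hm0 : m ≠ 0 := by
      intro h; rw [h] at hm; simp at hm; linarith
    have hcd : c ≤ d := by
      have : d = |m • a| := by rw [hm]; exact (abs_of_pos hd0).symm
      rw [zsmul_eq_mul, abs_mul] at this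
      have h1 : (1:ℝ) ≤ |(m:ℝ)| := by
        have := Int.one_le_abs hm0
        calc (1:ℝ) ≤ (|m| : ℤ) := by exact_mod_cast this
          _ = |(m:ℝ)| := by push_cast; rfl
      nlinarith [abs_nonneg a]
    have hn2 : (2:ℝ) * π = |(n:ℝ)| * c := by
      have : 2 * π = |n • a| := by rw [hn]; exact (abs_of_pos Stmt1Aux.two_pi_pos).symm
      rw [zsmul_eq_mul, abs_mul] at this
      exact this
    have hnge : (2:ℝ) ≤ |(n:ℝ)| := by
      by_contra hlt
      push_neg at hlt
      have : |(n:ℝ)| ≤ 1 := by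
        have : |n| < 2 := by exact_mod_cast (by push_cast at hlt ⊢; linarith : (|n|:ℝ) < 2)
        have : |n| ≤ 1 := by omega
        exact_mod_cast this
      nlinarith
    have hcπ : c ≤ π := by nlinarith
    exact ⟨c, hc0, hcπ, hcP⟩

-- main construction from a symmetry center c with w antitone on [c, c+π]
lemma main_construct (hcont : Continuous w) (hper : ∀ t, w (t + 2 * π) = w t)
    (hnc : ∃ s t : ℝ, w s < w t) (c : ℝ)
    (hsym : ∀ θ : ℝ, w (c + θ) = w (c - θ))
    (hanti : ∀ x y, c ≤ x → x ≤ y → y ≤ c + π → w y ≤ w x) :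
    ∃ (α₀ θ₁ θ₂ : ℝ), θ₁ ∈ Set.Ico (0 : ℝ) π ∧ θ₂ ∈ Set.Ico (0 : ℝ) π ∧
      θ₁ + θ₂ < π ∧
      (∀ t : ℝ, (∀ s, w s ≤ w t) ↔
        ∃ θ : ℝ, |θ| ≤ θ₁ ∧ ∃ k : ℤ, t = α₀ + θ + 2 * π * k) ∧
      (∀ t : ℝ, (∀ s, w t ≤ w s) ↔
        ∃ θ : ℝ, |θ| ≤ θ₂ ∧ ∃ k : ℤ, t = α₀ + π + θ + 2 * π * k) := by
  have hπ := pi_pos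
  -- reduction of any point into (c - π, c + π]
  have hreduce : ∀ s : ℝ, ∃ (u : ℝ) (k : ℤ), u ∈ Set.Ioc (-π) π ∧ s = c + u + 2 * π * k := by
    intro s
    set u : ℝ := toIocMod two_pi_pos (c - π) s - c with hu
    have hmem : toIocMod two_pi_pos (c - π) s ∈ Set.Ioc (c - π) (c - π + 2 * π) :=
      toIocMod_mem_Ioc two_pi_pos (c - π) s
    set k : ℤ := toIocDiv two_pi_pos (c - π) s with hk
    have hdec : toIocMod two_pi_pos (c - π) s + k • (2 * π) = s :=
      toIocMod_add_toIocDiv_zsmul two_pi_pos (c - π) s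
    refine ⟨u, k, ⟨by simp only [hu]; linarith [hmem.1], by simp only [hu]; linarith [hmem.2]⟩, ?_⟩
    rw [← hdec, zsmul_eq_mul]; simp only [hu]; ring
  -- value on reduced representative
  have hval : ∀ (u : ℝ) (k : ℤ), w (c + u + 2 * π * k) = w (c + u) := fun u k => perz hper k _
  -- w(c + u) = w(c + |u|)
  have habs : ∀ u : ℝ, w (c + u) = w (c + |u|) := by
    intro u
    rcases abs_choice u with h | h
    · rw [h]
    · rw [h, hsym (-u)]; ring_nf
  -- global max at c
  have hMmax : ∀ s, w s ≤ w c := by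
    intro s
    obtain ⟨u, k, hu, hs⟩ := hreduce s
    rw [hs, hval, habs]
    exact hanti c (c + |u|) le_rfl (by linarith [abs_nonneg u]) (by
      have := abs_le.2 ⟨le_of_lt hu.1, hu.2⟩; linarith)
  -- global min at c + π
  have hmmin : ∀ s, w (c + π) ≤ w s := by
    intro s
    obtain ⟨u, k, hu, hs⟩ := hreduce s
    rw [hs, hval u k, habs u]
    exact hanti (c + |u|) (c + π) (by linarith [abs_nonneg u])
      (by have := abs_le.2 ⟨le_of_lt hu.1, hu.2⟩; linarith) le_rfl
  have hMm : w (c + π) < w c := by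
    obtain ⟨s, t, hst⟩ := hnc
    exact lt_of_le_of_lt (hmmin s) (lt_of_lt_of_le hst (hMmax t))
  -- the max plateau
  set T₁ : Set ℝ := {θ | θ ∈ Set.Icc (0:ℝ) π ∧ w (c + θ) = w c} with hT₁
  have hT₁closed : IsClosed T₁ := by
    apply IsClosed.inter isClosed_Icc
    exact isClosed_eq (hcont.comp (continuous_const.add continuous_id)) continuous_const
  have hT₁ne : T₁.Nonempty := ⟨0, ⟨le_rfl, le_of_lt hπ⟩, by norm_num⟩
  have hT₁bdd : BddAbove T₁ := ⟨π, fun x hx => hx.1.2⟩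
  set θ₁ : ℝ := sSup T₁ with hθ₁
  have hθ₁mem : θ₁ ∈ T₁ := hT₁closed.csSup_mem hT₁ne hT₁bdd
  have hθ₁lt : θ₁ < π := by
    rcases lt_or_eq_of_le hθ₁mem.1.2 with h | h
    · exact h
    · exfalso; have := hθ₁mem.2; rw [h] at this; linarith
  -- characterization of the max plateau
  have hiff₁ : ∀ θ : ℝ, 0 ≤ θ → θ ≤ π → (w (c + θ) = w c ↔ θ ≤ θ₁) := by
    intro θ h0 hπ'
    constructor
    · intro h; exact le_csSup hT₁bdd ⟨⟨h0, hπ'⟩, h⟩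
    · intro h
      refine le_antisymm (hMmax _) ?_
      calc w c = w (c + θ₁) := hθ₁mem.2.symm
        _ ≤ w (c + θ) := hanti (c + θ) (c + θ₁) (by linarith) (by linarith)
            (by linarith [hθ₁mem.1.2])
  -- the min plateau
  set T₂ : Set ℝ := {θ | θ ∈ Set.Icc (0:ℝ) π ∧ w (c + θ) = w (c + π)} with hT₂
  have hT₂closed : IsClosed T₂ := by
    apply IsClosed.inter isClosed_Icc
    exact isClosed_eq (hcont.comp (continuous_const.add continuous_id)) continuous_const
  have hT₂ne : T₂.Nonempty := ⟨π, ⟨le_of_lt hπ, le_rfl⟩, rfl⟩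
  have hT₂bdd : BddBelow T₂ := ⟨0, fun x hx => hx.1.1⟩
  set θ₂' : ℝ := sInf T₂ with hθ₂'
  have hθ₂'mem : θ₂' ∈ T₂ := hT₂closed.csInf_mem hT₂ne hT₂bdd
  have hθ₂'pos : 0 < θ₂' := by
    rcases lt_or_eq_of_le hθ₂'mem.1.1 with h | h
    · exact h
    · exfalso; have := hθ₂'mem.2; rw [← h] at this; simp at this; linarith
  have hiff₂ : ∀ θ : ℝ, 0 ≤ θ → θ ≤ π → (w (c + θ) = w (c + π) ↔ θ₂' ≤ θ) := by
    intro θ h0 hπ'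
    constructor
    · intro h; exact csInf_le hT₂bdd ⟨⟨h0, hπ'⟩, h⟩
    · intro h
      refine le_antisymm ?_ (hmmin _)
      calc w (c + θ) ≤ w (c + θ₂') := hanti (c + θ₂') (c + θ) (by linarith [hθ₂'mem.1.1])
            (by linarith) (by linarith)
        _ = w (c + π) := hθ₂'mem.2
  set θ₂ : ℝ := π - θ₂' with hθ₂def
  have hθ₁θ₂' : θ₁ < θ₂' := by
    by_contra hcon
    push_neg at hcon
    have := (hiff₂ θ₁ hθ₁mem.1.1 hθ₁mem.1.2).2 hcon
    rw [hθ₁mem.2] at this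
    linarith
  refine ⟨c, θ₁, θ₂, ⟨hθ₁mem.1.1, hθ₁lt⟩,
    ⟨by simp only [hθ₂def]; linarith [hθ₂'mem.1.2], by simp only [hθ₂def]; linarith⟩,
    by simp only [hθ₂def]; linarith, ?_, ?_⟩
  · -- max characterization
    intro t
    constructor
    · intro h
      have hwt : w t = w c := le_antisymm (hMmax t) (h c)
      obtain ⟨u, k, hu, ht⟩ := hreduce t
      have h1 : w (c + |u|) = w c := by rw [← habs, ← hval u k, ← ht, hwt]
      have h2 : |u| ≤ θ₁ := (hiff₁ |u| (abs_nonneg u)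
        (abs_le.2 ⟨le_of_lt hu.1, hu.2⟩)).1 h1
      exact ⟨u, h2, k, ht⟩
    · rintro ⟨θ, hθ, k, ht⟩
      have h1 : w (c + |θ|) = w c :=
        (hiff₁ |θ| (abs_nonneg θ) (by linarith [hθ₁lt, le_trans hθ (le_of_lt hθ₁lt)])).2
          (le_trans le_rfl hθ)
      have hwt : w t = w c := by rw [ht, hval, habs, h1]
      intro s; rw [hwt]; exact hMmax s
  · -- min characterization
    intro t
    constructor
    · intro h
      have hwt : w t = w (c + π) := le_antisymm (h (c + π)) (hmmin t)
      obtain ⟨u, k, hu, ht⟩ := hreduce t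
      have h1 : w (c + |u|) = w (c + π) := by rw [← habs, ← hval u k, ← ht, hwt]
      have h2 : θ₂' ≤ |u| := (hiff₂ |u| (abs_nonneg u)
        (abs_le.2 ⟨le_of_lt hu.1, hu.2⟩)).1 h1
      -- choose θ with c + π + θ ≡ t
      rcases le_or_gt 0 u with hu0 | hu0
      · -- u ∈ [θ₂', π]; θ = u - π ∈ [θ₂'-π, 0]
        refine ⟨u - π, ?_, k, by rw [ht]; ring⟩
        rw [abs_of_nonpos (by linarith [hu.2])]
        rw [abs_of_nonneg hu0] at h2
        simp only [hθ₂def]; linarith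
      · -- u ∈ (-π, -θ₂']; θ = u + π ∈ (0, π - θ₂']
        refine ⟨u + π, ?_, k - 1, by rw [ht]; push_cast; ring⟩
        rw [abs_of_nonneg (by linarith [hu.1])]
        rw [abs_of_neg hu0] at h2
        simp only [hθ₂def]; linarith
    · rintro ⟨θ, hθ, k, ht⟩
      have hθb : |θ| ≤ π - θ₂' := by simpa [hθ₂def] using hθ
      obtain ⟨hb1, hb2⟩ := abs_le.1 hθb
      set v : ℝ := π - |θ| with hv
      have hvmem : θ₂' ≤ v ∧ v ≤ π := ⟨by simp only [hv]; linarith,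
        by simp only [hv]; linarith [abs_nonneg θ]⟩
      have hwv : w (c + π + θ) = w (c + v) := by
        rcases le_or_gt θ 0 with h | h
        · rw [show c + π + θ = c + v by rw [hv, abs_of_nonpos h]; ring]
        · have e1 := hsym (π + θ)
          have e2 := hper (c - (π + θ))
          rw [show c - (π + θ) + 2*π = c + v by rw [hv, abs_of_pos h]; ring] at e2
          rw [show c + π + θ = c + (π + θ) by ring, e1, ← e2]
      have hwt : w t = w (c + π) := by
        rw [ht, show c + π + θ + 2*π*(k:ℝ) = c + (π + θ) + 2*π*(k:ℝ) by ring, hval,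
          show c + (π + θ) = c + π + θ by ring, hwv]
        exact (hiff₂ v (le_trans (le_of_lt hθ₂'pos) hvmem.1) hvmem.2).2 hvmem.1
      intro s; rw [hwt]; exact hmmin s

end Stmt1Aux

open Real Set Stmt1Aux in
/-- For a continuous, positive, 2π-periodic, angle-separable, nonconstant
function `w`, the set of maximum points is a closed arc centered at some angle `α₀`,
the set of minimum points is a closed arc centered at the antipodal angle `α₀ + π`,
and these arcs are disjoint (`θ₁ + θ₂ < π`). -/
theorem stmt_1 (w : ℝ → ℝ)
    (hpos : ∀ t, 0 < w t)
    (hcont : Continuous w)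
    (hper : ∀ t, w (t + 2 * Real.pi) = w t)
    (hsep : ∀ α : ℝ,
      (∀ θ ∈ Set.Ioo (0 : ℝ) Real.pi, w (α - θ) ≤ w (α + θ)) ∨
      (∀ θ ∈ Set.Ioo (0 : ℝ) Real.pi, w (α + θ) ≤ w (α - θ)))
    (hnc : ∃ s t : ℝ, w s < w t) :
    ∃ (α₀ θ₁ θ₂ : ℝ), θ₁ ∈ Set.Ico (0 : ℝ) Real.pi ∧ θ₂ ∈ Set.Ico (0 : ℝ) Real.pi ∧
      θ₁ + θ₂ < Real.pi ∧
      (∀ t : ℝ, (∀ s, w s ≤ w t) ↔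
        ∃ θ : ℝ, |θ| ≤ θ₁ ∧ ∃ k : ℤ, t = α₀ + θ + 2 * Real.pi * k) ∧
      (∀ t : ℝ, (∀ s, w t ≤ w s) ↔
        ∃ θ : ℝ, |θ| ≤ θ₂ ∧ ∃ k : ℤ, t = α₀ + Real.pi + θ + 2 * Real.pi * k) := by
  classical
  have hπ := Real.pi_pos
  set A : Set ℝ := {α | ∀ θ ∈ Set.Ioo (0:ℝ) π, w (α - θ) ≤ w (α + θ)} with hA
  set B : Set ℝ := {α | ∀ θ ∈ Set.Ioo (0:ℝ) π, w (α + θ) ≤ w (α - θ)} with hB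
  have hAclosed : IsClosed A := by
    have hh : A = ⋂ θ ∈ Set.Ioo (0:ℝ) π, {α | w (α - θ) ≤ w (α + θ)} := by
      ext α; simp [hA]
    rw [hh]
    refine isClosed_biInter fun θ _ => isClosed_le ?_ ?_ <;> fun_prop
  have hBclosed : IsClosed B := by
    have hh : B = ⋂ θ ∈ Set.Ioo (0:ℝ) π, {α | w (α + θ) ≤ w (α - θ)} := by
      ext α; simp [hB]
    rw [hh]
    refine isClosed_biInter fun θ _ => isClosed_le ?_ ?_ <;> fun_prop
  have hcover : ∀ α, α ∈ A ∨ α ∈ B := hsep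
  have hshiftA : ∀ α, α ∈ A → α + π ∈ B := by
    intro α hα θ hθ
    have hθ' : π - θ ∈ Set.Ioo (0:ℝ) π := ⟨by linarith [hθ.2], by linarith [hθ.1]⟩
    have h1 := hα (π - θ) hθ'
    have e1 := hper (α - (π - θ))
    rw [show α - (π - θ) + 2*π = α + π + θ by ring] at e1
    rw [e1, show α + π - θ = α + (π - θ) by ring]
    exact h1
  have hshiftB : ∀ α, α ∈ B → α + π ∈ A := by
    intro α hα θ hθ
    have hθ' : π - θ ∈ Set.Ioo (0:ℝ) π := ⟨by linarith [hθ.2], by linarith [hθ.1]⟩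
    have h1 := hα (π - θ) hθ'
    have e1 := hper (α - (π - θ))
    rw [show α - (π - θ) + 2*π = α + π + θ by ring] at e1
    rw [e1, show α + π - θ = α + (π - θ) by ring]
    exact h1
  have hABne : (A ∩ B).Nonempty := by
    by_contra hcon
    rw [Set.not_nonempty_iff_eq_empty] at hcon
    have hcompl : A = Bᶜ := by
      ext α
      constructor
      · intro ha hb
        have : α ∈ A ∩ B := ⟨ha, hb⟩
        rw [hcon] at this
        exact this
      · intro hb
        rcases hcover α with h | h
        · exact h
        · exact absurd h hb
    have hAopen : IsOpen A := by rw [hcompl]; exact hBclosed.isOpen_compl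
    rcases isClopen_iff.1 ⟨hAclosed, hAopen⟩ with h | h
    · rcases hcover 0 with h0 | h0
      · rw [h] at h0; exact h0
      · have := hshiftB 0 h0
        rw [h] at this; exact this
    · have h0 : (0:ℝ) ∈ A := by rw [h]; trivial
      have h1 : (0:ℝ) + π ∈ B := hshiftA 0 h0
      have h2 : (0:ℝ) + π ∈ A := by rw [h]; trivial
      rw [hcompl] at h2
      exact h2 h1
  obtain ⟨α₀, hα₀A, hα₀B⟩ := hABne
  have hsym₀ : ∀ θ, w (α₀ + θ) = w (α₀ - θ) := sym_of_AB hper α₀ hα₀A hα₀B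
  have hnos : ∀ β ∈ Set.Ioo α₀ (α₀ + π), β ∉ A ∩ B := by
    rintro β hβ ⟨hβA, hβB⟩
    have hsymβ := sym_of_AB hper β hβA hβB
    have hdper := period_of_two_sym α₀ β hsym₀ hsymβ
    rcases const_or_small_period hcont hper (2 * (β - α₀))
      (by have := hβ.1; linarith) (by have := hβ.2; linarith) hdper with
      ⟨c, hc0, hcπ, hcper⟩ | hconst
    · exact period_contra hcont hper hsep hnc c hc0 hcπ hcper
    · obtain ⟨s, t, hst⟩ := hnc
      exact absurd (hconst s t) (ne_of_lt hst)
  have hsub : Set.Ioo α₀ (α₀ + π) ⊆ A ∨ Set.Ioo α₀ (α₀ + π) ⊆ B := by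
    have hpre : IsPreconnected (Set.Ioo α₀ (α₀ + π)) := isPreconnected_Ioo
    have hdisj : Disjoint Bᶜ Aᶜ := by
      rw [Set.disjoint_left]
      intro x hxB hxA
      rcases hcover x with h | h
      · exact hxA h
      · exact hxB h
    have hcov : Set.Ioo α₀ (α₀ + π) ⊆ Bᶜ ∪ Aᶜ := by
      intro x hx
      by_cases hA' : x ∈ A
      · left; intro hB'; exact hnos x hx ⟨hA', hB'⟩
      · right; exact hA'
    rcases hpre.subset_or_subset hBclosed.isOpen_compl hAclosed.isOpen_compl hdisj hcov with
      h | h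
    · left
      intro x hx
      rcases hcover x with h' | h'
      · exact h'
      · exact absurd h' (h hx)
    · right
      intro x hx
      rcases hcover x with h' | h'
      · exact absurd h' (h hx)
      · exact h'
  rcases hsub with hIA | hIB
  · -- w increasing on [α₀, α₀+π]; use center α₀ + π
    have hmono : ∀ x y, α₀ ≤ x → x ≤ y → y ≤ α₀ + π → w x ≤ w y := by
      intro x y hx hxy hy
      rcases eq_or_lt_of_le hxy with rfl | hlt
      · exact le_rfl
      · have hmid : (x + y)/2 ∈ Set.Ioo α₀ (α₀ + π) := ⟨by linarith, by linarith⟩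
        have hh := hIA hmid ((y - x)/2) ⟨by linarith, by linarith⟩
        rw [show (x+y)/2 - (y-x)/2 = x by ring, show (x+y)/2 + (y-x)/2 = y by ring] at hh
        exact hh
    have hsymc : ∀ θ, w ((α₀ + π) + θ) = w ((α₀ + π) - θ) := by
      intro θ
      have h1 := hsym₀ (π + θ)
      have h2 := hper (α₀ - (π + θ))
      rw [show α₀ - (π + θ) + 2*π = (α₀ + π) - θ by ring] at h2
      rw [show (α₀ + π) + θ = α₀ + (π + θ) by ring, h1,
        show α₀ - (π + θ) = α₀ - (π + θ) from rfl]
      exact h2.symm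
    have hrefl : ∀ z, w z = w (2*α₀ + 2*π - z) := by
      intro z
      have h1 := hsym₀ (z - α₀)
      rw [show α₀ + (z - α₀) = z by ring, show α₀ - (z - α₀) = 2*α₀ - z by ring] at h1
      have h2 := hper (2*α₀ - z)
      rw [show 2*α₀ - z + 2*π = 2*α₀ + 2*π - z by ring] at h2
      rw [h1]
      exact h2.symm
    have hantic : ∀ x y, (α₀ + π) ≤ x → x ≤ y → y ≤ (α₀ + π) + π → w y ≤ w x := by
      intro x y hx hxy hy
      rw [hrefl x, hrefl y]
      exact hmono (2*α₀ + 2*π - y) (2*α₀ + 2*π - x) (by linarith) (by linarith) (by linarith)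
    exact main_construct hcont hper hnc (α₀ + π) hsymc hantic
  · -- w decreasing on [α₀, α₀+π]; use center α₀
    have hantic : ∀ x y, α₀ ≤ x → x ≤ y → y ≤ α₀ + π → w y ≤ w x := by
      intro x y hx hxy hy
      rcases eq_or_lt_of_le hxy with rfl | hlt
      · exact le_rfl
      · have hmid : (x + y)/2 ∈ Set.Ioo α₀ (α₀ + π) := ⟨by linarith, by linarith⟩
        have hh := hIB hmid ((y - x)/2) ⟨by linarith, by linarith⟩
        rw [show (x+y)/2 - (y-x)/2 = x by ring, show (x+y)/2 + (y-x)/2 = y by ring] at hh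
        exact hh
    exact main_construct hcont hper hnc α₀ hsym₀ hantic
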